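/- Let X be a formal vector field on C^2 of order ≥ 2 and f ∈ C[[x,y]]. If X = f X' for some formal vector field X' = a' ∂/∂x + b' ∂/∂y, then Exp(X) = (x + f·P, y + f·Q) for some formal power series P, Q. In particular the ideal generated by the two components of Exp(X) − id equals the ideal generated by f times the components of X when f and X' share no common factor; consequently, the components p, q of Exp(X) − id and the components a, b of X generate the same ideal of C[[x,y]]. -/

import Mathlib

open Finsupp

noncomputable section

abbrev F2 : Type := MvPowerSeries (Fin 2) ℂ

/-- total degree of a monomial exponent -/
def deg (d : Fin 2 →₀ ℕ) : ℕ := d 0 + d 1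

/-- the exponent (m, n) -/
def idx (m n : ℕ) : Fin 2 →₀ ℕ := Finsupp.single 0 m + Finsupp.single 1 n

/-- partial derivative of a formal power series -/
def pd (i : Fin 2) (f : F2) : F2 :=
  fun d => ((d i : ℂ) + 1) * MvPowerSeries.coeff (d + Finsupp.single i 1) f

/-- the derivation a ∂/∂x + b ∂/∂y applied to g -/
def vf (a b g : F2) : F2 := a * pd 0 g + b * pd 1 g

/-- `ordGE f k` : the order ν(f) is at least k -/
def ordGE (f : F2) (k : ℕ) : Prop :=
  ∀ d : Fin 2 →₀ ℕ, deg d < k → MvPowerSeries.coeff d f = 0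

/-- exp X (g) = Σ_j (1/j!) X^j(g), coefficientwise -/
def expX (a b g : F2) : F2 :=
  fun d => ∑' j : ℕ, ((j.factorial : ℂ))⁻¹ * MvPowerSeries.coeff d ((vf a b)^[j] g)

/-- degree-k homogeneous part -/
def HT (k : ℕ) (f : F2) : F2 :=
  fun d => if deg d = k then MvPowerSeries.coeff d f else 0

/-- substitution y := x·v :  f(x, xv), in coordinates (x, v) -/
def blowup (f : F2) : F2 :=
  fun d => if d 1 ≤ d 0 then MvPowerSeries.coeff (idx (d 0 - d 1) (d 1)) f else 0

/-- `dehom k f` = f_k(1, v), where f_k is the degree-k homogeneous part of f -/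
def dehom (k : ℕ) (f : F2) : F2 :=
  fun d => if d 0 = 0 ∧ d 1 ≤ k then MvPowerSeries.coeff (idx (k - d 1) (d 1)) f else 0

/-- evaluation of the degree-k homogeneous part of f at (1, v0) -/
def evk (k : ℕ) (v0 : ℂ) (f : F2) : ℂ :=
  ∑ n ∈ Finset.range (k+1), MvPowerSeries.coeff (idx (k-n) n) f * v0 ^ n

/-- the linear change of coordinates f(x, y) ↦ f(x, y + v0·x) -/
def shear (v0 : ℂ) (f : F2) : F2 :=
  fun d => ∑ j ∈ Finset.range (deg d + 1),
    if d 1 ≤ j ∧ j - d 1 ≤ d 0 then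
      (j.choose (d 1) : ℂ) * v0 ^ (j - d 1) *
        MvPowerSeries.coeff (idx (d 0 - (j - d 1)) j) f
    else 0

/-- the coordinate x -/
def Xv : F2 := MvPowerSeries.X 0
/-- the coordinate y (alias v in the blow-up chart) -/
def Yv : F2 := MvPowerSeries.X 1

end

noncomputable section

-- auxiliary lemmas

lemma coeff_app (h : F2) (d : Fin 2 →₀ ℕ) : MvPowerSeries.coeff d h = h d := rfl

lemma deg_add (d e : Fin 2 →₀ ℕ) : deg (d + e) = deg d + deg e := by
  simp [deg, Finsupp.add_apply]; ring

lemma deg_single (i : Fin 2) : deg (Finsupp.single i 1) = 1 := by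
  fin_cases i <;> simp [deg, Finsupp.single_apply]

lemma ordGE_mul {u v : F2} {m n : ℕ} (hu : ordGE u m) (hv : ordGE v n) :
    ordGE (u * v) (m + n) := by
  intro d hd
  rw [MvPowerSeries.coeff_mul]
  refine Finset.sum_eq_zero fun p hp => ?_
  rw [Finset.HasAntidiagonal.mem_antidiagonal] at hp
  have hdeg : deg p.1 + deg p.2 = deg d := by rw [← deg_add, hp]
  rcases lt_or_ge (deg p.1) m with h | h
  · rw [hu p.1 h, zero_mul]
  · have : deg p.2 < n := by omega
    rw [hv p.2 this, mul_zero]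

lemma ordGE_pd {g : F2} {k : ℕ} (i : Fin 2) (hg : ordGE g (k + 1)) :
    ordGE (pd i g) k := by
  intro d hd
  rw [coeff_app]
  unfold pd
  rw [hg _ (by rw [deg_add, deg_single]; omega), mul_zero]

lemma ordGE_vf {a b g : F2} {k : ℕ} (ha : ordGE a 2) (hb : ordGE b 2)
    (hg : ordGE g (k + 1)) : ordGE (vf a b g) (k + 2) := by
  intro d hd
  unfold vf
  rw [map_add, ordGE_mul ha (ordGE_pd 0 hg) d (by omega),
    ordGE_mul hb (ordGE_pd 1 hg) d (by omega), add_zero]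

lemma ordGE_X (i : Fin 2) : ordGE (MvPowerSeries.X i) 1 := by
  intro d hd
  rw [MvPowerSeries.coeff_X]
  have : d ≠ Finsupp.single i 1 := by
    intro h; rw [h, deg_single] at hd; omega
  simp [this]

lemma ordGE_iter {a b g : F2} (ha : ordGE a 2) (hb : ordGE b 2) (hg : ordGE g 1) :
    ∀ j : ℕ, ordGE ((vf a b)^[j] g) (j + 1) := by
  intro j
  induction j with
  | zero => simpa using hg
  | succ n ih =>
    rw [Function.iterate_succ_apply']
    exact ordGE_vf ha hb ih

def Pser (a b g : F2) : F2 :=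
  fun d => ∑' j : ℕ, (((j+1).factorial : ℂ))⁻¹ *
    MvPowerSeries.coeff d (pd 0 ((vf a b)^[j] g))

def Qser (a b g : F2) : F2 :=
  fun d => ∑' j : ℕ, (((j+1).factorial : ℂ))⁻¹ *
    MvPowerSeries.coeff d (pd 1 ((vf a b)^[j] g))

lemma Pser_eq_sum {a b g : F2} (ha : ordGE a 2) (hb : ordGE b 2) (hg : ordGE g 1)
    (d : Fin 2 →₀ ℕ) {N : ℕ} (hN : deg d ≤ N) :
    Pser a b g d = ∑ j ∈ Finset.range (N + 1), (((j+1).factorial : ℂ))⁻¹ *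
      MvPowerSeries.coeff d (pd 0 ((vf a b)^[j] g)) := by
  refine tsum_eq_sum fun j hj => ?_
  rw [Finset.mem_range, not_lt] at hj
  rw [ordGE_pd 0 (ordGE_iter ha hb hg j) d (by omega), mul_zero]

lemma Qser_eq_sum {a b g : F2} (ha : ordGE a 2) (hb : ordGE b 2) (hg : ordGE g 1)
    (d : Fin 2 →₀ ℕ) {N : ℕ} (hN : deg d ≤ N) :
    Qser a b g d = ∑ j ∈ Finset.range (N + 1), (((j+1).factorial : ℂ))⁻¹ *
      MvPowerSeries.coeff d (pd 1 ((vf a b)^[j] g)) := by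
  refine tsum_eq_sum fun j hj => ?_
  rw [Finset.mem_range, not_lt] at hj
  rw [ordGE_pd 1 (ordGE_iter ha hb hg j) d (by omega), mul_zero]

lemma coeff_mul_ser {a u : F2} (d : Fin 2 →₀ ℕ) {N : ℕ} (hN : deg d ≤ N)
    (F : ℕ → F2)
    (hu : ∀ e : Fin 2 →₀ ℕ, deg e ≤ N →
      u e = ∑ j ∈ Finset.range (N + 1), (((j+1).factorial : ℂ))⁻¹ *
        MvPowerSeries.coeff e (F j)) :
    MvPowerSeries.coeff d (a * u) =
      ∑ j ∈ Finset.range (N + 1), (((j+1).factorial : ℂ))⁻¹ *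
        MvPowerSeries.coeff d (a * F j) := by
  rw [MvPowerSeries.coeff_mul]
  have : ∀ p ∈ Finset.HasAntidiagonal.antidiagonal d,
      MvPowerSeries.coeff p.1 a * MvPowerSeries.coeff p.2 u =
      ∑ j ∈ Finset.range (N + 1), (((j+1).factorial : ℂ))⁻¹ *
        (MvPowerSeries.coeff p.1 a * MvPowerSeries.coeff p.2 (F j)) := by
    intro p hp
    rw [Finset.HasAntidiagonal.mem_antidiagonal] at hp
    have hp2 : deg p.2 ≤ N := by
      have : deg p.1 + deg p.2 = deg d := by rw [← deg_add, hp]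
      omega
    rw [coeff_app u p.2, hu p.2 hp2, Finset.mul_sum]
    exact Finset.sum_congr rfl fun j _ => by ring
  rw [Finset.sum_congr rfl this, Finset.sum_comm]
  refine Finset.sum_congr rfl fun j _ => ?_
  rw [MvPowerSeries.coeff_mul, Finset.mul_sum]

lemma expX_eq {a b g : F2} (ha : ordGE a 2) (hb : ordGE b 2) (hg : ordGE g 1) :
    expX a b g = g + a * Pser a b g + b * Qser a b g := by
  apply MvPowerSeries.ext
  intro d
  set N := deg d with hNdef
  have hle : deg d ≤ N := le_refl _
  -- LHS
  have hL : MvPowerSeries.coeff d (expX a b g) =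
      ∑ j ∈ Finset.range (N + 1), ((j.factorial : ℂ))⁻¹ *
        MvPowerSeries.coeff d ((vf a b)^[j] g) := by
    rw [coeff_app]
    refine tsum_eq_sum fun j hj => ?_
    rw [Finset.mem_range, not_lt] at hj
    rw [ordGE_iter ha hb hg j d (by omega), mul_zero]
  -- RHS products
  have hP := coeff_mul_ser (a := a) d hle (fun j => pd 0 ((vf a b)^[j] g))
    (fun e he => Pser_eq_sum ha hb hg e he)
  have hQ := coeff_mul_ser (a := b) d hle (fun j => pd 1 ((vf a b)^[j] g))
    (fun e he => Qser_eq_sum ha hb hg e he)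
  rw [hL, map_add, map_add, hP, hQ, add_assoc, ← Finset.sum_add_distrib]
  have hsum : ∀ j, (((j+1).factorial : ℂ))⁻¹ *
        MvPowerSeries.coeff d (a * pd 0 ((vf a b)^[j] g)) +
      (((j+1).factorial : ℂ))⁻¹ *
        MvPowerSeries.coeff d (b * pd 1 ((vf a b)^[j] g)) =
      (((j+1).factorial : ℂ))⁻¹ *
        MvPowerSeries.coeff d ((vf a b)^[j+1] g) := by
    intro j
    rw [Function.iterate_succ_apply']
    show _ = _ * MvPowerSeries.coeff d (vf a b ((vf a b)^[j] g))
    unfold vf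
    rw [map_add, mul_add]
  rw [Finset.sum_congr rfl fun j _ => hsum j]
  -- now compare: LHS sum over range (N+1) of (j!)⁻¹ coeff (w_j)
  -- = coeff g + Σ_{j<N} ((j+1)!)⁻¹ coeff w_{j+1}
  rw [Finset.sum_range_succ' (fun j => ((j.factorial : ℂ))⁻¹ *
    MvPowerSeries.coeff d ((vf a b)^[j] g)) N]
  rw [Finset.sum_range_succ (fun j => (((j+1).factorial : ℂ))⁻¹ *
    MvPowerSeries.coeff d ((vf a b)^[j+1] g)) N]
  rw [ordGE_iter ha hb hg (N+1) d (by omega), mul_zero, add_zero]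
  simp [Nat.factorial_zero]
  ring


lemma Pser_constant {a b g : F2} (ha : ordGE a 2) (hb : ordGE b 2) (hg : ordGE g 1) :
    Pser a b g 0 = MvPowerSeries.coeff (Finsupp.single 0 1) g := by
  have h0 : deg (0 : Fin 2 →₀ ℕ) ≤ 0 := by simp [deg]
  have := Pser_eq_sum ha hb hg (0 : Fin 2 →₀ ℕ) h0
  rw [this, Finset.sum_range_one]
  simp [coeff_app, pd]

lemma Qser_constant {a b g : F2} (ha : ordGE a 2) (hb : ordGE b 2) (hg : ordGE g 1) :
    Qser a b g 0 = MvPowerSeries.coeff (Finsupp.single 1 1) g := by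
  have h0 : deg (0 : Fin 2 →₀ ℕ) ≤ 0 := by simp [deg]
  have := Qser_eq_sum ha hb hg (0 : Fin 2 →₀ ℕ) h0
  rw [this, Finset.sum_range_one]
  simp [coeff_app, pd]


/-- if X = f·X' then Exp(X) = (x + f·P, y + f·Q); moreover the components of
Exp(X) - id and the components of X generate the same ideal of ℂ[[x,y]]. -/
theorem Exp_factor (f a' b' : F2) (ha : ordGE (f * a') 2) (hb : ordGE (f * b') 2) :
    (∃ P Q : F2,
        expX (f * a') (f * b') Xv = Xv + f * P ∧
        expX (f * a') (f * b') Yv = Yv + f * Q) ∧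
    Ideal.span {expX (f * a') (f * b') Xv - Xv, expX (f * a') (f * b') Yv - Yv}
      = Ideal.span {f * a', f * b'} := by
  set a := f * a' with hadef
  set b := f * b' with hbdef
  have hx : ordGE Xv 1 := ordGE_X 0
  have hy : ordGE Yv 1 := ordGE_X 1
  set Px := Pser a b Xv with hPx
  set Qx := Qser a b Xv with hQx
  set Py := Pser a b Yv with hPy
  set Qy := Qser a b Yv with hQy
  have hX : expX a b Xv = Xv + a * Px + b * Qx := expX_eq ha hb hx
  have hY : expX a b Yv = Yv + a * Py + b * Qy := expX_eq ha hb hy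
  constructor
  · exact ⟨a' * Px + b' * Qx, a' * Py + b' * Qy,
      by rw [hX, hadef, hbdef]; ring, by rw [hY, hadef, hbdef]; ring⟩
  · have hp : expX a b Xv - Xv = Px * a + Qx * b := by rw [hX]; ring
    have hq : expX a b Yv - Yv = Py * a + Qy * b := by rw [hY]; ring
    set D := Px * Qy - Qx * Py with hD
    have e1 : Px 0 = 1 := by
      rw [hPx, Pser_constant ha hb hx]
      simp [Xv, MvPowerSeries.coeff_X]
    have e2 : Qx 0 = 0 := by
      rw [hQx, Qser_constant ha hb hx]
      simp [Xv, MvPowerSeries.coeff_X, Finsupp.single_eq_single_iff]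
    have e3 : Py 0 = 0 := by
      rw [hPy, Pser_constant ha hb hy]
      simp [Yv, MvPowerSeries.coeff_X, Finsupp.single_eq_single_iff]
    have e4 : Qy 0 = 1 := by
      rw [hQy, Qser_constant ha hb hy]
      simp [Yv, MvPowerSeries.coeff_X]
    have hD0 : MvPowerSeries.constantCoeff D ≠ 0 := by
      have : MvPowerSeries.constantCoeff D = Px 0 * Qy 0 - Qx 0 * Py 0 := by
        rw [hD, map_sub, map_mul, map_mul]; rfl
      rw [this, e1, e2, e3, e4]
      norm_num
    have hDinv : D⁻¹ * D = 1 := MvPowerSeries.inv_mul_cancel D hD0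
    have ca : D⁻¹ * Qy * (expX a b Xv - Xv) + (-(D⁻¹ * Qx)) * (expX a b Yv - Yv) = a := by
      rw [hp, hq]
      have h1 : D⁻¹ * Qy * (Px * a + Qx * b) + (-(D⁻¹ * Qx)) * (Py * a + Qy * b)
          = (D⁻¹ * D) * a := by rw [hD]; ring
      rw [h1, hDinv, one_mul]
    have cb : (-(D⁻¹ * Py)) * (expX a b Xv - Xv) + (D⁻¹ * Px) * (expX a b Yv - Yv) = b := by
      rw [hp, hq]
      have h1 : (-(D⁻¹ * Py)) * (Px * a + Qx * b) + (D⁻¹ * Px) * (Py * a + Qy * b)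
          = (D⁻¹ * D) * b := by rw [hD]; ring
      rw [h1, hDinv, one_mul]
    apply le_antisymm
    · rw [Ideal.span_le]
      rintro z hz
      simp only [Set.mem_insert_iff, Set.mem_singleton_iff] at hz
      rcases hz with rfl | rfl
      · exact Ideal.mem_span_pair.mpr ⟨Px, Qx, hp.symm⟩
      · exact Ideal.mem_span_pair.mpr ⟨Py, Qy, hq.symm⟩
    · rw [Ideal.span_le]
      rintro z hz
      simp only [Set.mem_insert_iff, Set.mem_singleton_iff] at hz
      rcases hz with rfl | rfl
      · exact Ideal.mem_span_pair.mpr ⟨D⁻¹ * Qy, -(D⁻¹ * Qx), ca⟩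
      · exact Ideal.mem_span_pair.mpr ⟨-(D⁻¹ * Py), D⁻¹ * Px, cb⟩

end
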